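/- There are no integers X, Y satisfying Y^2 = X^3 + 630. -/

import Mathlib

/-- A positive natural number all of whose prime factors are `≡ 1` or `3 (mod 8)`
is itself `≡ 1` or `3 (mod 8)`. -/
lemma prod_mod8 : ∀ n : ℕ, 0 < n →
    (∀ p : ℕ, p.Prime → p ∣ n → p % 8 = 1 ∨ p % 8 = 3) →
    n % 8 = 1 ∨ n % 8 = 3 := by
  intro n
  induction n using Nat.strong_induction_on with
  | _ n ih =>
    intro hn h
    by_cases h1 : n = 1
    · left; simp [h1]
    · have hp : n.minFac.Prime := Nat.minFac_prime h1
      obtain ⟨m, hm⟩ := Nat.minFac_dvd n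
      have hm0 : 0 < m := by
        rcases Nat.eq_zero_or_pos m with h0 | h0
        · simp [h0] at hm; omega
        · exact h0
      have h2le : 2 ≤ n.minFac := hp.two_le
      have hmlt : m < n := by
        have : 2 * m ≤ n := by
          calc 2 * m ≤ n.minFac * m := Nat.mul_le_mul_right m h2le
          _ = n := hm.symm
        omega
      have ihm := ih m hmlt hm0 (fun p pp pd => h p pp (hm ▸ pd.mul_left _))
      have hpf := h _ hp (Nat.minFac_dvd n)
      rw [hm, Nat.mul_mod]
      rcases hpf with h2 | h2 <;> rcases ihm with h3 | h3 <;> rw [h2, h3] <;> decide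

theorem mordell_630 : ¬ ∃ X Y : ℤ, Y^2 = X^3 + 630 := by
  rintro ⟨X, Y, h⟩
  -- Step 1: X ≡ 3 (mod 8)
  have hz : ((Y : ZMod 8))^2 = ((X : ZMod 8))^3 + 630 := by
    have := congrArg (fun t : ℤ => (t : ZMod 8)) h
    push_cast at this
    simpa using this
  have hX8 : (X : ZMod 8) = 3 := by
    have key : ∀ a b : ZMod 8, b^2 = a^3 + 630 → a = 3 := by decide
    exact key _ _ hz
  have h8 : ∃ k : ℤ, X = 8 * k + 3 := by
    have : ((X - 3 : ℤ) : ZMod 8) = 0 := by push_cast [hX8]; ring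
    obtain ⟨k, hk⟩ := (ZMod.intCast_zmod_eq_zero_iff_dvd (X - 3) 8).mp this
    exact ⟨k, by omega⟩
  -- Step 2: the factor q
  set q : ℤ := X^2 - 18*X + 324 with hq
  have hqpos : 0 < q := by nlinarith [sq_nonneg (X - 9)]
  have hq7 : q % 8 = 7 := by
    obtain ⟨k, hk⟩ := h8
    have : q = 8 * (8*k^2 - 12*k + 34) + 7 := by rw [hq, hk]; ring
    omega
  have hdvd : q ∣ Y^2 + 5202 := ⟨X + 18, by rw [hq]; linear_combination h⟩
  -- Step 3: every prime factor of q.toNat is ≡ 1 or 3 mod 8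
  have hqn : (q.toNat : ℤ) = q := Int.toNat_of_nonneg hqpos.le
  have hfac : ∀ p : ℕ, p.Prime → p ∣ q.toNat → p % 8 = 1 ∨ p % 8 = 3 := by
    intro p pp hpd
    have hpq : (p : ℤ) ∣ q := hqn ▸ Int.natCast_dvd_natCast.mpr hpd
    by_cases hp2 : p = 2
    · exfalso
      obtain ⟨c, hc⟩ := hpq
      rw [hp2] at hc
      omega
    by_cases hp3 : p = 3
    · right; rw [hp3]
    by_cases hp17 : p = 17
    · exfalso
      have h0 : ((q : ℤ) : ZMod 17) = 0 := by
        rw [ZMod.intCast_zmod_eq_zero_iff_dvd]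
        exact_mod_cast hp17 ▸ hpq
      rw [hq] at h0
      push_cast at h0
      have key : ∀ a : ZMod 17, a^2 - 18*a + 324 ≠ 0 := by decide
      exact key _ h0
    -- main case
    haveI : Fact p.Prime := ⟨pp⟩
    have hpY : (p : ℤ) ∣ Y^2 + 5202 := hpq.trans hdvd
    have h0 : ((Y : ZMod p))^2 + 5202 = 0 := by
      have := (ZMod.intCast_zmod_eq_zero_iff_dvd (Y^2 + 5202) p).mpr hpY
      push_cast at this
      simpa using this
    have hY : ((Y : ZMod p))^2 = -5202 := by linear_combination h0
    have h51 : (51 : ZMod p) ≠ 0 := by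
      intro hc
      have : (p : ℕ) ∣ 51 := by
        have := (ZMod.natCast_eq_zero_iff 51 p).mp (by exact_mod_cast hc)
        exact this
      have h317 : p ∣ 3 * 17 := by norm_num at this ⊢; exact this
      rcases (Nat.Prime.dvd_mul pp).mp h317 with hd | hd
      · exact hp3 ((Nat.prime_dvd_prime_iff_eq pp (by norm_num)).mp hd)
      · exact hp17 ((Nat.prime_dvd_prime_iff_eq pp (by norm_num)).mp hd)
    have hsq : (-2 : ZMod p) = ((Y : ZMod p) * (51 : ZMod p)⁻¹)^2 := by
      rw [mul_pow, hY, show (-5202 : ZMod p) = -2 * 51^2 by norm_num,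
        mul_assoc, ← mul_pow, mul_inv_cancel₀ h51, one_pow, mul_one]
    exact (ZMod.exists_sq_eq_neg_two_iff hp2).mp ⟨(Y : ZMod p) * (51 : ZMod p)⁻¹, by rw [hsq]; ring⟩
  -- Step 4: contradiction
  have := prod_mod8 q.toNat (by omega) hfac
  omega
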